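/- Consider 2×3 weight matrices. There are exactly 12 loop atoms: matrices ℓ : [2]×[3] → ℝ supported on the two rows and a pair of distinct columns {j, j'}, with three of the four entries on that support equal to +1 and one equal to −1, and zeros elsewhere. Let w : [2]×[3] → ℝ be any weight matrix such that the all-ones configuration is a ground state of the RBM energy E_w(v,h) = −Σ_{i,j} w_{ij} v_i h_j over {−1,1}² × {−1,1}³. Then there exist nonnegative coefficients x₁, …, x₁₂ ≥ 0 such that w − Σ_{k=1}^{12} x_k ℓ^{(k)} has all entries nonnegative; that is, every gauged 2×3 RBM instance is a conical combination of loop atoms plus a nonnegative matrix. -/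

import Mathlib

open Finset

/-- The RBM energy of an unbiased RBM with weight matrix `W`. -/
noncomputable def rbmEnergy {n m : ℕ} (W : Fin n → Fin m → ℝ)
    (v : Fin n → ℝ) (h : Fin m → ℝ) : ℝ :=
  -(∑ i, ∑ j, W i j * v i * h j)

/-- A loop atom (with negative weight `-1`): a matrix supported on two distinct rows
and two distinct columns, with three supported entries `+1` and one entry `-1`. -/
def IsLoopAtom {n m : ℕ} (A : Fin n → Fin m → ℝ) : Prop :=
  ∃ (i₁ i₂ : Fin n) (j₁ j₂ : Fin m), i₁ ≠ i₂ ∧ j₁ ≠ j₂ ∧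
    ((A i₁ j₁ = -1 ∧ A i₁ j₂ = 1 ∧ A i₂ j₁ = 1 ∧ A i₂ j₂ = 1) ∨
     (A i₁ j₁ = 1 ∧ A i₁ j₂ = -1 ∧ A i₂ j₁ = 1 ∧ A i₂ j₂ = 1) ∨
     (A i₁ j₁ = 1 ∧ A i₁ j₂ = 1 ∧ A i₂ j₁ = -1 ∧ A i₂ j₂ = 1) ∨
     (A i₁ j₁ = 1 ∧ A i₁ j₂ = 1 ∧ A i₂ j₁ = 1 ∧ A i₂ j₂ = -1)) ∧
    (∀ i j, ¬((i = i₁ ∨ i = i₂) ∧ (j = j₁ ∨ j = j₂)) → A i j = 0)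

def laZ (i : Fin 2) (j j' : Fin 3) : Fin 2 → Fin 3 → ℤ :=
  fun p q => if p = i then (if q = j then -1 else if q = j' then 1 else 0)
             else (if q = j then 1 else if q = j' then 1 else 0)

noncomputable def la (i : Fin 2) (j j' : Fin 3) : Fin 2 → Fin 3 → ℝ :=
  fun p q => ((laZ i j j' p q : ℤ) : ℝ)

def T : Fin 12 → Fin 2 × Fin 3 × Fin 3 :=
  ![(0,0,1),(0,0,2),(0,1,0),(0,1,2),(0,2,0),(0,2,1),
    (1,0,1),(1,0,2),(1,1,0),(1,1,2),(1,2,0),(1,2,1)]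

noncomputable def L (k : Fin 12) : Fin 2 → Fin 3 → ℝ :=
  la (T k).1 (T k).2.1 (T k).2.2

lemma fin2_cover (p i : Fin 2) : p = i ∨ p = i + 1 := by revert p i; decide

lemma fin2_cover' (p i₁ i₂ : Fin 2) (h : i₁ ≠ i₂) : p = i₁ ∨ p = i₂ := by
  revert h; revert p i₁ i₂; decide

lemma la_isLoopAtom (i : Fin 2) (j j' : Fin 3) (h : j ≠ j') : IsLoopAtom (la i j j') := by
  refine ⟨i, i + 1, j, j', by revert i; decide, h, Or.inl ?_, ?_⟩
  · refine ⟨?_, ?_, ?_, ?_⟩ <;>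
      simp [la, laZ, h, h.symm, (show i + 1 ≠ i by revert i; decide)]
  · intro p q hpq
    have : ¬(q = j ∨ q = j') := fun hq => hpq ⟨fin2_cover p i, hq⟩
    push_neg at this
    simp [la, laZ, this.1, this.2]

lemma eq_la_of_pattern (A : Fin 2 → Fin 3 → ℝ) (i₁ i₂ : Fin 2) (j₁ j₂ : Fin 3)
    (hi : i₁ ≠ i₂) (hj : j₁ ≠ j₂)
    (h11 : A i₁ j₁ = -1) (h12 : A i₁ j₂ = 1) (h21 : A i₂ j₁ = 1) (h22 : A i₂ j₂ = 1)
    (hz : ∀ i j, ¬((i = i₁ ∨ i = i₂) ∧ (j = j₁ ∨ j = j₂)) → A i j = 0) :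
    A = la i₁ j₁ j₂ := by
  funext p q
  rcases fin2_cover' p i₁ i₂ hi with hp | hp <;> subst hp
  · by_cases hq1 : q = j₁
    · subst hq1; simpa [la, laZ] using h11
    · by_cases hq2 : q = j₂
      · subst hq2; simpa [la, laZ, hj.symm] using h12
      · rw [hz _ _ (fun hc => by tauto)]; simp [la, laZ, hq1, hq2]
  · by_cases hq1 : q = j₁
    · subst hq1; simpa [la, laZ, hi.symm] using h21
    · by_cases hq2 : q = j₂
      · subst hq2; simpa [la, laZ, hi.symm, hj.symm] using h22
      · rw [hz _ _ (fun hc => by tauto)]; simp [la, laZ, hi.symm, hq1, hq2]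

lemma isLoopAtom_iff (A : Fin 2 → Fin 3 → ℝ) : IsLoopAtom A ↔ ∃ k, A = L k := by
  constructor
  · rintro ⟨i₁, i₂, j₁, j₂, hi, hj, hpat, hz⟩
    have key : ∃ (i : Fin 2) (j j' : Fin 3), j ≠ j' ∧ A = la i j j' := by
      rcases hpat with ⟨h1,h2,h3,h4⟩ | ⟨h1,h2,h3,h4⟩ | ⟨h1,h2,h3,h4⟩ | ⟨h1,h2,h3,h4⟩
      · exact ⟨i₁, j₁, j₂, hj, eq_la_of_pattern A i₁ i₂ j₁ j₂ hi hj h1 h2 h3 h4 hz⟩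
      · exact ⟨i₁, j₂, j₁, hj.symm, eq_la_of_pattern A i₁ i₂ j₂ j₁ hi hj.symm h2 h1 h4 h3
          (fun i j hc => hz i j (fun hc' => by tauto))⟩
      · exact ⟨i₂, j₁, j₂, hj, eq_la_of_pattern A i₂ i₁ j₁ j₂ hi.symm hj h3 h4 h1 h2
          (fun i j hc => hz i j (fun hc' => by tauto))⟩
      · exact ⟨i₂, j₂, j₁, hj.symm, eq_la_of_pattern A i₂ i₁ j₂ j₁ hi.symm hj.symm h4 h3 h2 h1
          (fun i j hc => hz i j (fun hc' => by tauto))⟩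
    obtain ⟨i, j, j', hjj, hA⟩ := key
    have : ∃ k : Fin 12, T k = (i, j, j') := by
      clear hA; revert hjj; revert i j j'; decide
    obtain ⟨k, hk⟩ := this
    exact ⟨k, by rw [hA]; unfold L; rw [hk]⟩
  · rintro ⟨k, rfl⟩
    have : (T k).2.1 ≠ (T k).2.2 := by revert k; decide
    exact la_isLoopAtom _ _ _ this

lemma L_injective : Function.Injective L := by
  have hZ : ∀ k l : Fin 12, (fun p q => laZ (T k).1 (T k).2.1 (T k).2.2 p q) =
      (fun p q => laZ (T l).1 (T l).2.1 (T l).2.2 p q) → k = l := by decide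
  intro k l h
  apply hZ
  funext p q
  have := congrFun (congrFun h p) q
  unfold L la at this
  exact_mod_cast this

lemma ncard_loopAtoms : {A : Fin 2 → Fin 3 → ℝ | IsLoopAtom A}.ncard = 12 := by
  have hset : {A : Fin 2 → Fin 3 → ℝ | IsLoopAtom A} = Set.range L := by
    ext A; simpa [Set.mem_range, eq_comm] using isLoopAtom_iff A
  have : Set.range L = ↑(Finset.univ.image L) := by simp
  rw [hset, this, Set.ncard_coe_finset, Finset.card_image_of_injective _ L_injective,
    Finset.card_univ, Fintype.card_fin]


set_option maxHeartbeats 2000000 in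
set_option maxHeartbeats 2000000 in

lemma key (a0 a1 a2 b0 b1 b2 : ℝ)
    (hR0 : 0 ≤ a0 + a1 + a2) (hR1 : 0 ≤ b0 + b1 + b2)
    (hC0 : 0 ≤ a0 + b0) (hC1 : 0 ≤ a1 + b1) (hC2 : 0 ≤ a2 + b2)
    (hM00 : 0 ≤ a1 + a2 + b0) (hM01 : 0 ≤ a0 + a2 + b1)
    (hM02 : 0 ≤ a0 + a1 + b2) (hM10 : 0 ≤ b1 + b2 + a0)
    (hM11 : 0 ≤ b0 + b2 + a1) (hM12 : 0 ≤ b0 + b1 + a2) :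
    ∃ u001 u002 u010 u012 u020 u021 u101 u102 u110 u112 u120 u121 : ℝ,
      0 ≤ u001 ∧ 0 ≤ u002 ∧ 0 ≤ u010 ∧ 0 ≤ u012 ∧ 0 ≤ u020 ∧ 0 ≤ u021 ∧
      0 ≤ u101 ∧ 0 ≤ u102 ∧ 0 ≤ u110 ∧ 0 ≤ u112 ∧ 0 ≤ u120 ∧ 0 ≤ u121 ∧
      0 ≤ a0 + u001 + u002 - u010 - u020 - u101 - u102 - u110 - u120 ∧
      0 ≤ a1 + u010 + u012 - u001 - u021 - u110 - u112 - u101 - u121 ∧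
      0 ≤ a2 + u020 + u021 - u002 - u012 - u120 - u121 - u102 - u112 ∧
      0 ≤ b0 + u101 + u102 - u110 - u120 - u001 - u002 - u010 - u020 ∧
      0 ≤ b1 + u110 + u112 - u101 - u121 - u010 - u012 - u001 - u021 ∧
      0 ≤ b2 + u120 + u121 - u102 - u112 - u020 - u021 - u002 - u012 := by
  rcases le_total a0 0 with s0 | s0
  · -- col0: a ≤ 0
    rcases le_total a1 0 with s1 | s1
    · -- col1: a ≤ 0
      rcases le_total a2 0 with s2 | s2
      · -- col2: a ≤ 0
        refine ⟨0, 0, 0, 0, 0, 0, 0, 0, 0, 0, 0, 0, ?_, ?_, ?_, ?_, ?_, ?_, ?_, ?_, ?_, ?_, ?_, ?_, ?_, ?_, ?_, ?_, ?_, ?_⟩ <;> linarith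
      · rcases le_total b2 0 with sb2 | sb2
        · -- col2: b ≤ 0
          refine ⟨0, 0, 0, 0, 0, 0, 0, 0, 0, 0, 0, 0, ?_, ?_, ?_, ?_, ?_, ?_, ?_, ?_, ?_, ?_, ?_, ?_, ?_, ?_, ?_, ?_, ?_, ?_⟩ <;> linarith
        · -- col2: nonneg
          refine ⟨0, (-a0), 0, (-a1), 0, 0, 0, 0, 0, 0, 0, 0, ?_, ?_, ?_, ?_, ?_, ?_, ?_, ?_, ?_, ?_, ?_, ?_, ?_, ?_, ?_, ?_, ?_, ?_⟩ <;> linarith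
    · rcases le_total b1 0 with sb1 | sb1
      · -- col1: b ≤ 0
        rcases le_total a2 0 with s2 | s2
        · -- col2: a ≤ 0
          refine ⟨0, 0, 0, 0, 0, 0, 0, 0, 0, 0, 0, 0, ?_, ?_, ?_, ?_, ?_, ?_, ?_, ?_, ?_, ?_, ?_, ?_, ?_, ?_, ?_, ?_, ?_, ?_⟩ <;> linarith
        · rcases le_total b2 0 with sb2 | sb2
          · -- col2: b ≤ 0
            refine ⟨0, 0, 0, 0, 0, 0, 0, 0, 0, 0, 0, 0, ?_, ?_, ?_, ?_, ?_, ?_, ?_, ?_, ?_, ?_, ?_, ?_, ?_, ?_, ?_, ?_, ?_, ?_⟩ <;> linarith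
          · -- col2: nonneg
            refine ⟨0, (-a0), 0, 0, 0, 0, 0, 0, 0, (-b1), 0, 0, ?_, ?_, ?_, ?_, ?_, ?_, ?_, ?_, ?_, ?_, ?_, ?_, ?_, ?_, ?_, ?_, ?_, ?_⟩ <;> linarith
      · -- col1: nonneg
        rcases le_total a2 0 with s2 | s2
        · -- col2: a ≤ 0
          refine ⟨(-a0), 0, 0, 0, 0, (-a2), 0, 0, 0, 0, 0, 0, ?_, ?_, ?_, ?_, ?_, ?_, ?_, ?_, ?_, ?_, ?_, ?_, ?_, ?_, ?_, ?_, ?_, ?_⟩ <;> linarith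
        · rcases le_total b2 0 with sb2 | sb2
          · -- col2: b ≤ 0
            refine ⟨(-a0), 0, 0, 0, 0, 0, 0, 0, 0, 0, 0, (-b2), ?_, ?_, ?_, ?_, ?_, ?_, ?_, ?_, ?_, ?_, ?_, ?_, ?_, ?_, ?_, ?_, ?_, ?_⟩ <;> linarith
          · -- col2: nonneg
            rcases le_total a1 b1 with t1 | t1 <;> rcases le_total a2 b2 with t2 | t2
            · rcases le_total (-a0) a1 with hn | hn
              · refine ⟨(-a0), 0, 0, 0, 0, 0, 0, 0, 0, 0, 0, 0, ?_, ?_, ?_, ?_, ?_, ?_, ?_, ?_, ?_, ?_, ?_, ?_, ?_, ?_, ?_, ?_, ?_, ?_⟩ <;> linarith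
              · refine ⟨a1, ((-a0) - a1), 0, 0, 0, 0, 0, 0, 0, 0, 0, 0, ?_, ?_, ?_, ?_, ?_, ?_, ?_, ?_, ?_, ?_, ?_, ?_, ?_, ?_, ?_, ?_, ?_, ?_⟩ <;> linarith
            · rcases le_total (-a0) a1 with hn | hn
              · refine ⟨(-a0), 0, 0, 0, 0, 0, 0, 0, 0, 0, 0, 0, ?_, ?_, ?_, ?_, ?_, ?_, ?_, ?_, ?_, ?_, ?_, ?_, ?_, ?_, ?_, ?_, ?_, ?_⟩ <;> linarith
              · refine ⟨a1, ((-a0) - a1), 0, 0, 0, 0, 0, 0, 0, 0, 0, 0, ?_, ?_, ?_, ?_, ?_, ?_, ?_, ?_, ?_, ?_, ?_, ?_, ?_, ?_, ?_, ?_, ?_, ?_⟩ <;> linarith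
            · rcases le_total (-a0) b1 with hn | hn
              · refine ⟨(-a0), 0, 0, 0, 0, 0, 0, 0, 0, 0, 0, 0, ?_, ?_, ?_, ?_, ?_, ?_, ?_, ?_, ?_, ?_, ?_, ?_, ?_, ?_, ?_, ?_, ?_, ?_⟩ <;> linarith
              · refine ⟨b1, ((-a0) - b1), 0, 0, 0, 0, 0, 0, 0, 0, 0, 0, ?_, ?_, ?_, ?_, ?_, ?_, ?_, ?_, ?_, ?_, ?_, ?_, ?_, ?_, ?_, ?_, ?_, ?_⟩ <;> linarith
            · rcases le_total (-a0) b1 with hn | hn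
              · refine ⟨(-a0), 0, 0, 0, 0, 0, 0, 0, 0, 0, 0, 0, ?_, ?_, ?_, ?_, ?_, ?_, ?_, ?_, ?_, ?_, ?_, ?_, ?_, ?_, ?_, ?_, ?_, ?_⟩ <;> linarith
              · refine ⟨b1, ((-a0) - b1), 0, 0, 0, 0, 0, 0, 0, 0, 0, 0, ?_, ?_, ?_, ?_, ?_, ?_, ?_, ?_, ?_, ?_, ?_, ?_, ?_, ?_, ?_, ?_, ?_, ?_⟩ <;> linarith
  · rcases le_total b0 0 with sb0 | sb0
    · -- col0: b ≤ 0
      rcases le_total a1 0 with s1 | s1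
      · -- col1: a ≤ 0
        rcases le_total a2 0 with s2 | s2
        · -- col2: a ≤ 0
          refine ⟨0, 0, 0, 0, 0, 0, 0, 0, 0, 0, 0, 0, ?_, ?_, ?_, ?_, ?_, ?_, ?_, ?_, ?_, ?_, ?_, ?_, ?_, ?_, ?_, ?_, ?_, ?_⟩ <;> linarith
        · rcases le_total b2 0 with sb2 | sb2
          · -- col2: b ≤ 0
            refine ⟨0, 0, 0, 0, 0, 0, 0, 0, 0, 0, 0, 0, ?_, ?_, ?_, ?_, ?_, ?_, ?_, ?_, ?_, ?_, ?_, ?_, ?_, ?_, ?_, ?_, ?_, ?_⟩ <;> linarith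
          · -- col2: nonneg
            refine ⟨0, 0, 0, (-a1), 0, 0, 0, (-b0), 0, 0, 0, 0, ?_, ?_, ?_, ?_, ?_, ?_, ?_, ?_, ?_, ?_, ?_, ?_, ?_, ?_, ?_, ?_, ?_, ?_⟩ <;> linarith
      · rcases le_total b1 0 with sb1 | sb1
        · -- col1: b ≤ 0
          rcases le_total a2 0 with s2 | s2
          · -- col2: a ≤ 0
            refine ⟨0, 0, 0, 0, 0, 0, 0, 0, 0, 0, 0, 0, ?_, ?_, ?_, ?_, ?_, ?_, ?_, ?_, ?_, ?_, ?_, ?_, ?_, ?_, ?_, ?_, ?_, ?_⟩ <;> linarith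
          · rcases le_total b2 0 with sb2 | sb2
            · -- col2: b ≤ 0
              refine ⟨0, 0, 0, 0, 0, 0, 0, 0, 0, 0, 0, 0, ?_, ?_, ?_, ?_, ?_, ?_, ?_, ?_, ?_, ?_, ?_, ?_, ?_, ?_, ?_, ?_, ?_, ?_⟩ <;> linarith
            · -- col2: nonneg
              refine ⟨0, 0, 0, 0, 0, 0, 0, (-b0), 0, (-b1), 0, 0, ?_, ?_, ?_, ?_, ?_, ?_, ?_, ?_, ?_, ?_, ?_, ?_, ?_, ?_, ?_, ?_, ?_, ?_⟩ <;> linarith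
        · -- col1: nonneg
          rcases le_total a2 0 with s2 | s2
          · -- col2: a ≤ 0
            refine ⟨0, 0, 0, 0, 0, (-a2), (-b0), 0, 0, 0, 0, 0, ?_, ?_, ?_, ?_, ?_, ?_, ?_, ?_, ?_, ?_, ?_, ?_, ?_, ?_, ?_, ?_, ?_, ?_⟩ <;> linarith
          · rcases le_total b2 0 with sb2 | sb2
            · -- col2: b ≤ 0
              refine ⟨0, 0, 0, 0, 0, 0, (-b0), 0, 0, 0, 0, (-b2), ?_, ?_, ?_, ?_, ?_, ?_, ?_, ?_, ?_, ?_, ?_, ?_, ?_, ?_, ?_, ?_, ?_, ?_⟩ <;> linarith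
            · -- col2: nonneg
              rcases le_total a1 b1 with t1 | t1 <;> rcases le_total a2 b2 with t2 | t2
              · rcases le_total (-b0) a1 with hn | hn
                · refine ⟨0, 0, 0, 0, 0, 0, (-b0), 0, 0, 0, 0, 0, ?_, ?_, ?_, ?_, ?_, ?_, ?_, ?_, ?_, ?_, ?_, ?_, ?_, ?_, ?_, ?_, ?_, ?_⟩ <;> linarith
                · refine ⟨0, 0, 0, 0, 0, 0, a1, ((-b0) - a1), 0, 0, 0, 0, ?_, ?_, ?_, ?_, ?_, ?_, ?_, ?_, ?_, ?_, ?_, ?_, ?_, ?_, ?_, ?_, ?_, ?_⟩ <;> linarith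
              · rcases le_total (-b0) a1 with hn | hn
                · refine ⟨0, 0, 0, 0, 0, 0, (-b0), 0, 0, 0, 0, 0, ?_, ?_, ?_, ?_, ?_, ?_, ?_, ?_, ?_, ?_, ?_, ?_, ?_, ?_, ?_, ?_, ?_, ?_⟩ <;> linarith
                · refine ⟨0, 0, 0, 0, 0, 0, a1, ((-b0) - a1), 0, 0, 0, 0, ?_, ?_, ?_, ?_, ?_, ?_, ?_, ?_, ?_, ?_, ?_, ?_, ?_, ?_, ?_, ?_, ?_, ?_⟩ <;> linarith
              · rcases le_total (-b0) b1 with hn | hn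
                · refine ⟨0, 0, 0, 0, 0, 0, (-b0), 0, 0, 0, 0, 0, ?_, ?_, ?_, ?_, ?_, ?_, ?_, ?_, ?_, ?_, ?_, ?_, ?_, ?_, ?_, ?_, ?_, ?_⟩ <;> linarith
                · refine ⟨0, 0, 0, 0, 0, 0, b1, ((-b0) - b1), 0, 0, 0, 0, ?_, ?_, ?_, ?_, ?_, ?_, ?_, ?_, ?_, ?_, ?_, ?_, ?_, ?_, ?_, ?_, ?_, ?_⟩ <;> linarith
              · rcases le_total (-b0) b1 with hn | hn
                · refine ⟨0, 0, 0, 0, 0, 0, (-b0), 0, 0, 0, 0, 0, ?_, ?_, ?_, ?_, ?_, ?_, ?_, ?_, ?_, ?_, ?_, ?_, ?_, ?_, ?_, ?_, ?_, ?_⟩ <;> linarith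
                · refine ⟨0, 0, 0, 0, 0, 0, b1, ((-b0) - b1), 0, 0, 0, 0, ?_, ?_, ?_, ?_, ?_, ?_, ?_, ?_, ?_, ?_, ?_, ?_, ?_, ?_, ?_, ?_, ?_, ?_⟩ <;> linarith
    · -- col0: nonneg
      rcases le_total a1 0 with s1 | s1
      · -- col1: a ≤ 0
        rcases le_total a2 0 with s2 | s2
        · -- col2: a ≤ 0
          refine ⟨0, 0, (-a1), 0, (-a2), 0, 0, 0, 0, 0, 0, 0, ?_, ?_, ?_, ?_, ?_, ?_, ?_, ?_, ?_, ?_, ?_, ?_, ?_, ?_, ?_, ?_, ?_, ?_⟩ <;> linarith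
        · rcases le_total b2 0 with sb2 | sb2
          · -- col2: b ≤ 0
            refine ⟨0, 0, (-a1), 0, 0, 0, 0, 0, 0, 0, (-b2), 0, ?_, ?_, ?_, ?_, ?_, ?_, ?_, ?_, ?_, ?_, ?_, ?_, ?_, ?_, ?_, ?_, ?_, ?_⟩ <;> linarith
          · -- col2: nonneg
            rcases le_total a0 b0 with t1 | t1 <;> rcases le_total a2 b2 with t2 | t2
            · rcases le_total (-a1) a0 with hn | hn
              · refine ⟨0, 0, (-a1), 0, 0, 0, 0, 0, 0, 0, 0, 0, ?_, ?_, ?_, ?_, ?_, ?_, ?_, ?_, ?_, ?_, ?_, ?_, ?_, ?_, ?_, ?_, ?_, ?_⟩ <;> linarith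
              · refine ⟨0, 0, a0, ((-a1) - a0), 0, 0, 0, 0, 0, 0, 0, 0, ?_, ?_, ?_, ?_, ?_, ?_, ?_, ?_, ?_, ?_, ?_, ?_, ?_, ?_, ?_, ?_, ?_, ?_⟩ <;> linarith
            · rcases le_total (-a1) a0 with hn | hn
              · refine ⟨0, 0, (-a1), 0, 0, 0, 0, 0, 0, 0, 0, 0, ?_, ?_, ?_, ?_, ?_, ?_, ?_, ?_, ?_, ?_, ?_, ?_, ?_, ?_, ?_, ?_, ?_, ?_⟩ <;> linarith
              · refine ⟨0, 0, a0, ((-a1) - a0), 0, 0, 0, 0, 0, 0, 0, 0, ?_, ?_, ?_, ?_, ?_, ?_, ?_, ?_, ?_, ?_, ?_, ?_, ?_, ?_, ?_, ?_, ?_, ?_⟩ <;> linarith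
            · rcases le_total (-a1) b0 with hn | hn
              · refine ⟨0, 0, (-a1), 0, 0, 0, 0, 0, 0, 0, 0, 0, ?_, ?_, ?_, ?_, ?_, ?_, ?_, ?_, ?_, ?_, ?_, ?_, ?_, ?_, ?_, ?_, ?_, ?_⟩ <;> linarith
              · refine ⟨0, 0, b0, ((-a1) - b0), 0, 0, 0, 0, 0, 0, 0, 0, ?_, ?_, ?_, ?_, ?_, ?_, ?_, ?_, ?_, ?_, ?_, ?_, ?_, ?_, ?_, ?_, ?_, ?_⟩ <;> linarith
            · rcases le_total (-a1) b0 with hn | hn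
              · refine ⟨0, 0, (-a1), 0, 0, 0, 0, 0, 0, 0, 0, 0, ?_, ?_, ?_, ?_, ?_, ?_, ?_, ?_, ?_, ?_, ?_, ?_, ?_, ?_, ?_, ?_, ?_, ?_⟩ <;> linarith
              · refine ⟨0, 0, b0, ((-a1) - b0), 0, 0, 0, 0, 0, 0, 0, 0, ?_, ?_, ?_, ?_, ?_, ?_, ?_, ?_, ?_, ?_, ?_, ?_, ?_, ?_, ?_, ?_, ?_, ?_⟩ <;> linarith
      · rcases le_total b1 0 with sb1 | sb1
        · -- col1: b ≤ 0
          rcases le_total a2 0 with s2 | s2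
          · -- col2: a ≤ 0
            refine ⟨0, 0, 0, 0, (-a2), 0, 0, 0, (-b1), 0, 0, 0, ?_, ?_, ?_, ?_, ?_, ?_, ?_, ?_, ?_, ?_, ?_, ?_, ?_, ?_, ?_, ?_, ?_, ?_⟩ <;> linarith
          · rcases le_total b2 0 with sb2 | sb2
            · -- col2: b ≤ 0
              refine ⟨0, 0, 0, 0, 0, 0, 0, 0, (-b1), 0, (-b2), 0, ?_, ?_, ?_, ?_, ?_, ?_, ?_, ?_, ?_, ?_, ?_, ?_, ?_, ?_, ?_, ?_, ?_, ?_⟩ <;> linarith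
            · -- col2: nonneg
              rcases le_total a0 b0 with t1 | t1 <;> rcases le_total a2 b2 with t2 | t2
              · rcases le_total (-b1) a0 with hn | hn
                · refine ⟨0, 0, 0, 0, 0, 0, 0, 0, (-b1), 0, 0, 0, ?_, ?_, ?_, ?_, ?_, ?_, ?_, ?_, ?_, ?_, ?_, ?_, ?_, ?_, ?_, ?_, ?_, ?_⟩ <;> linarith
                · refine ⟨0, 0, 0, 0, 0, 0, 0, 0, a0, ((-b1) - a0), 0, 0, ?_, ?_, ?_, ?_, ?_, ?_, ?_, ?_, ?_, ?_, ?_, ?_, ?_, ?_, ?_, ?_, ?_, ?_⟩ <;> linarith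
              · rcases le_total (-b1) a0 with hn | hn
                · refine ⟨0, 0, 0, 0, 0, 0, 0, 0, (-b1), 0, 0, 0, ?_, ?_, ?_, ?_, ?_, ?_, ?_, ?_, ?_, ?_, ?_, ?_, ?_, ?_, ?_, ?_, ?_, ?_⟩ <;> linarith
                · refine ⟨0, 0, 0, 0, 0, 0, 0, 0, a0, ((-b1) - a0), 0, 0, ?_, ?_, ?_, ?_, ?_, ?_, ?_, ?_, ?_, ?_, ?_, ?_, ?_, ?_, ?_, ?_, ?_, ?_⟩ <;> linarith
              · rcases le_total (-b1) b0 with hn | hn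
                · refine ⟨0, 0, 0, 0, 0, 0, 0, 0, (-b1), 0, 0, 0, ?_, ?_, ?_, ?_, ?_, ?_, ?_, ?_, ?_, ?_, ?_, ?_, ?_, ?_, ?_, ?_, ?_, ?_⟩ <;> linarith
                · refine ⟨0, 0, 0, 0, 0, 0, 0, 0, b0, ((-b1) - b0), 0, 0, ?_, ?_, ?_, ?_, ?_, ?_, ?_, ?_, ?_, ?_, ?_, ?_, ?_, ?_, ?_, ?_, ?_, ?_⟩ <;> linarith
              · rcases le_total (-b1) b0 with hn | hn
                · refine ⟨0, 0, 0, 0, 0, 0, 0, 0, (-b1), 0, 0, 0, ?_, ?_, ?_, ?_, ?_, ?_, ?_, ?_, ?_, ?_, ?_, ?_, ?_, ?_, ?_, ?_, ?_, ?_⟩ <;> linarith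
                · refine ⟨0, 0, 0, 0, 0, 0, 0, 0, b0, ((-b1) - b0), 0, 0, ?_, ?_, ?_, ?_, ?_, ?_, ?_, ?_, ?_, ?_, ?_, ?_, ?_, ?_, ?_, ?_, ?_, ?_⟩ <;> linarith
        · -- col1: nonneg
          rcases le_total a2 0 with s2 | s2
          · -- col2: a ≤ 0
            rcases le_total a0 b0 with t1 | t1 <;> rcases le_total a1 b1 with t2 | t2
            · rcases le_total (-a2) a0 with hn | hn
              · refine ⟨0, 0, 0, 0, (-a2), 0, 0, 0, 0, 0, 0, 0, ?_, ?_, ?_, ?_, ?_, ?_, ?_, ?_, ?_, ?_, ?_, ?_, ?_, ?_, ?_, ?_, ?_, ?_⟩ <;> linarith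
              · refine ⟨0, 0, 0, 0, a0, ((-a2) - a0), 0, 0, 0, 0, 0, 0, ?_, ?_, ?_, ?_, ?_, ?_, ?_, ?_, ?_, ?_, ?_, ?_, ?_, ?_, ?_, ?_, ?_, ?_⟩ <;> linarith
            · rcases le_total (-a2) a0 with hn | hn
              · refine ⟨0, 0, 0, 0, (-a2), 0, 0, 0, 0, 0, 0, 0, ?_, ?_, ?_, ?_, ?_, ?_, ?_, ?_, ?_, ?_, ?_, ?_, ?_, ?_, ?_, ?_, ?_, ?_⟩ <;> linarith
              · refine ⟨0, 0, 0, 0, a0, ((-a2) - a0), 0, 0, 0, 0, 0, 0, ?_, ?_, ?_, ?_, ?_, ?_, ?_, ?_, ?_, ?_, ?_, ?_, ?_, ?_, ?_, ?_, ?_, ?_⟩ <;> linarith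
            · rcases le_total (-a2) b0 with hn | hn
              · refine ⟨0, 0, 0, 0, (-a2), 0, 0, 0, 0, 0, 0, 0, ?_, ?_, ?_, ?_, ?_, ?_, ?_, ?_, ?_, ?_, ?_, ?_, ?_, ?_, ?_, ?_, ?_, ?_⟩ <;> linarith
              · refine ⟨0, 0, 0, 0, b0, ((-a2) - b0), 0, 0, 0, 0, 0, 0, ?_, ?_, ?_, ?_, ?_, ?_, ?_, ?_, ?_, ?_, ?_, ?_, ?_, ?_, ?_, ?_, ?_, ?_⟩ <;> linarith
            · rcases le_total (-a2) b0 with hn | hn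
              · refine ⟨0, 0, 0, 0, (-a2), 0, 0, 0, 0, 0, 0, 0, ?_, ?_, ?_, ?_, ?_, ?_, ?_, ?_, ?_, ?_, ?_, ?_, ?_, ?_, ?_, ?_, ?_, ?_⟩ <;> linarith
              · refine ⟨0, 0, 0, 0, b0, ((-a2) - b0), 0, 0, 0, 0, 0, 0, ?_, ?_, ?_, ?_, ?_, ?_, ?_, ?_, ?_, ?_, ?_, ?_, ?_, ?_, ?_, ?_, ?_, ?_⟩ <;> linarith
          · rcases le_total b2 0 with sb2 | sb2
            · -- col2: b ≤ 0
              rcases le_total a0 b0 with t1 | t1 <;> rcases le_total a1 b1 with t2 | t2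
              · rcases le_total (-b2) a0 with hn | hn
                · refine ⟨0, 0, 0, 0, 0, 0, 0, 0, 0, 0, (-b2), 0, ?_, ?_, ?_, ?_, ?_, ?_, ?_, ?_, ?_, ?_, ?_, ?_, ?_, ?_, ?_, ?_, ?_, ?_⟩ <;> linarith
                · refine ⟨0, 0, 0, 0, 0, 0, 0, 0, 0, 0, a0, ((-b2) - a0), ?_, ?_, ?_, ?_, ?_, ?_, ?_, ?_, ?_, ?_, ?_, ?_, ?_, ?_, ?_, ?_, ?_, ?_⟩ <;> linarith
              · rcases le_total (-b2) a0 with hn | hn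
                · refine ⟨0, 0, 0, 0, 0, 0, 0, 0, 0, 0, (-b2), 0, ?_, ?_, ?_, ?_, ?_, ?_, ?_, ?_, ?_, ?_, ?_, ?_, ?_, ?_, ?_, ?_, ?_, ?_⟩ <;> linarith
                · refine ⟨0, 0, 0, 0, 0, 0, 0, 0, 0, 0, a0, ((-b2) - a0), ?_, ?_, ?_, ?_, ?_, ?_, ?_, ?_, ?_, ?_, ?_, ?_, ?_, ?_, ?_, ?_, ?_, ?_⟩ <;> linarith
              · rcases le_total (-b2) b0 with hn | hn
                · refine ⟨0, 0, 0, 0, 0, 0, 0, 0, 0, 0, (-b2), 0, ?_, ?_, ?_, ?_, ?_, ?_, ?_, ?_, ?_, ?_, ?_, ?_, ?_, ?_, ?_, ?_, ?_, ?_⟩ <;> linarith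
                · refine ⟨0, 0, 0, 0, 0, 0, 0, 0, 0, 0, b0, ((-b2) - b0), ?_, ?_, ?_, ?_, ?_, ?_, ?_, ?_, ?_, ?_, ?_, ?_, ?_, ?_, ?_, ?_, ?_, ?_⟩ <;> linarith
              · rcases le_total (-b2) b0 with hn | hn
                · refine ⟨0, 0, 0, 0, 0, 0, 0, 0, 0, 0, (-b2), 0, ?_, ?_, ?_, ?_, ?_, ?_, ?_, ?_, ?_, ?_, ?_, ?_, ?_, ?_, ?_, ?_, ?_, ?_⟩ <;> linarith
                · refine ⟨0, 0, 0, 0, 0, 0, 0, 0, 0, 0, b0, ((-b2) - b0), ?_, ?_, ?_, ?_, ?_, ?_, ?_, ?_, ?_, ?_, ?_, ?_, ?_, ?_, ?_, ?_, ?_, ?_⟩ <;> linarith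
            · -- col2: nonneg
              refine ⟨0, 0, 0, 0, 0, 0, 0, 0, 0, 0, 0, 0, ?_, ?_, ?_, ?_, ?_, ?_, ?_, ?_, ?_, ?_, ?_, ?_, ?_, ?_, ?_, ?_, ?_, ?_⟩ <;> linarith



theorem gauged_two_by_three_is_conical_combination
    (w : Fin 2 → Fin 3 → ℝ)
    (hgauged : ∀ (v : Fin 2 → ℝ) (h : Fin 3 → ℝ),
      (∀ i, v i = 1 ∨ v i = -1) → (∀ j, h j = 1 ∨ h j = -1) →
      rbmEnergy w v h ≥ rbmEnergy w (fun _ => 1) (fun _ => 1)) :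
    -- there are exactly 12 loop atoms on a 2×3 matrix
    {A : Fin 2 → Fin 3 → ℝ | IsLoopAtom A}.ncard = 12 ∧
    -- and `w` is a conical combination of the 12 loop atoms plus a nonnegative matrix
    ∃ (ℓ : Fin 12 → Fin 2 → Fin 3 → ℝ) (x : Fin 12 → ℝ),
      Function.Injective ℓ ∧ (∀ k, IsLoopAtom (ℓ k)) ∧ (∀ k, 0 ≤ x k) ∧
      ∀ i j, 0 ≤ w i j - ∑ k, x k * ℓ k i j := by
  refine ⟨ncard_loopAtoms, ?_⟩
  have hcon : ∀ (v : Fin 2 → ℝ) (h : Fin 3 → ℝ),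
      (∀ i, v i = 1 ∨ v i = -1) → (∀ j, h j = 1 ∨ h j = -1) →
      ∑ i, ∑ j, w i j * v i * h j ≤ ∑ i, ∑ j, w i j := by
    intro v h hv hh
    have := hgauged v h hv hh
    simp only [rbmEnergy, ge_iff_le, neg_le_neg_iff, mul_one] at this
    linarith [this]
  have vsgn : ∀ s : Fin 2 → ℝ, (s = ![1,1] ∨ s = ![1,-1] ∨ s = ![-1,1]) →
      (∀ i, s i = 1 ∨ s i = -1) := by
    rintro s (rfl | rfl | rfl) i <;> fin_cases i <;> norm_num
  have hsgn : ∀ s : Fin 3 → ℝ,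
      (s = ![1,1,1] ∨ s = ![-1,1,1] ∨ s = ![1,-1,1] ∨ s = ![1,1,-1]) →
      (∀ j, s j = 1 ∨ s j = -1) := by
    rintro s (rfl | rfl | rfl | rfl) j <;> fin_cases j <;> norm_num
  have S : ∀ (v : Fin 2 → ℝ) (h : Fin 3 → ℝ),
      ∑ i, ∑ j, w i j * v i * h j
        = (w 0 0 * v 0 * h 0 + w 0 1 * v 0 * h 1 + w 0 2 * v 0 * h 2)
          + (w 1 0 * v 1 * h 0 + w 1 1 * v 1 * h 1 + w 1 2 * v 1 * h 2) := by
    intro v h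
    simp [Fin.sum_univ_succ]
    ring
  have S2 : ∑ i, ∑ j, w i j
      = (w 0 0 + w 0 1 + w 0 2) + (w 1 0 + w 1 1 + w 1 2) := by
    simp [Fin.sum_univ_succ]; ring
  have hv2 : ∀ a b c : ℝ, ![a, b, c] 2 = c := fun _ _ _ => rfl
  have hR0 : 0 ≤ w 0 0 + w 0 1 + w 0 2 := by
    have := hcon ![-1,1] ![1,1,1] (vsgn _ (by tauto)) (hsgn _ (by tauto))
    rw [S, S2] at this; norm_num [hv2] at this; linarith
  have hR1 : 0 ≤ w 1 0 + w 1 1 + w 1 2 := by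
    have := hcon ![1,-1] ![1,1,1] (vsgn _ (by tauto)) (hsgn _ (by tauto))
    rw [S, S2] at this; norm_num [hv2] at this; linarith
  have hC0 : 0 ≤ w 0 0 + w 1 0 := by
    have := hcon ![1,1] ![-1,1,1] (vsgn _ (by tauto)) (hsgn _ (by tauto))
    rw [S, S2] at this; norm_num [hv2] at this; linarith
  have hC1 : 0 ≤ w 0 1 + w 1 1 := by
    have := hcon ![1,1] ![1,-1,1] (vsgn _ (by tauto)) (hsgn _ (by tauto))
    rw [S, S2] at this; norm_num [hv2] at this; linarith
  have hC2 : 0 ≤ w 0 2 + w 1 2 := by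
    have := hcon ![1,1] ![1,1,-1] (vsgn _ (by tauto)) (hsgn _ (by tauto))
    rw [S, S2] at this; norm_num [hv2] at this; linarith
  have hM00 : 0 ≤ w 0 1 + w 0 2 + w 1 0 := by
    have := hcon ![-1,1] ![-1,1,1] (vsgn _ (by tauto)) (hsgn _ (by tauto))
    rw [S, S2] at this; norm_num [hv2] at this; linarith
  have hM01 : 0 ≤ w 0 0 + w 0 2 + w 1 1 := by
    have := hcon ![-1,1] ![1,-1,1] (vsgn _ (by tauto)) (hsgn _ (by tauto))
    rw [S, S2] at this; norm_num [hv2] at this; linarith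
  have hM02 : 0 ≤ w 0 0 + w 0 1 + w 1 2 := by
    have := hcon ![-1,1] ![1,1,-1] (vsgn _ (by tauto)) (hsgn _ (by tauto))
    rw [S, S2] at this; norm_num [hv2] at this; linarith
  have hM10 : 0 ≤ w 1 1 + w 1 2 + w 0 0 := by
    have := hcon ![1,-1] ![-1,1,1] (vsgn _ (by tauto)) (hsgn _ (by tauto))
    rw [S, S2] at this; norm_num [hv2] at this; linarith
  have hM11 : 0 ≤ w 1 0 + w 1 2 + w 0 1 := by
    have := hcon ![1,-1] ![1,-1,1] (vsgn _ (by tauto)) (hsgn _ (by tauto))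
    rw [S, S2] at this; norm_num [hv2] at this; linarith
  have hM12 : 0 ≤ w 1 0 + w 1 1 + w 0 2 := by
    have := hcon ![1,-1] ![1,1,-1] (vsgn _ (by tauto)) (hsgn _ (by tauto))
    rw [S, S2] at this; norm_num [hv2] at this; linarith
  obtain ⟨u001, u002, u010, u012, u020, u021, u101, u102, u110, u112, u120, u121,
    p1, p2, p3, p4, p5, p6, p7, p8, p9, p10, p11, p12,
    r1, r2, r3, r4, r5, r6⟩ :=
    key (w 0 0) (w 0 1) (w 0 2) (w 1 0) (w 1 1) (w 1 2)
      hR0 hR1 hC0 hC1 hC2 hM00 hM01 hM02 hM10 hM11 hM12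
  refine ⟨L, ![u001, u002, u010, u012, u020, u021, u101, u102, u110, u112, u120, u121],
    L_injective, ?_, ?_, ?_⟩
  · intro k
    have : (T k).2.1 ≠ (T k).2.2 := by revert k; decide
    exact la_isLoopAtom _ _ _ this
  · intro k; fin_cases k <;> simpa
  · intro i j
    fin_cases i <;> fin_cases j <;>
      · simp [Fin.sum_univ_succ, L, la, laZ, T]
        linarith
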